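/- Let n, d, p ≥ 1 be integers, ε > 0, and set N = (n+1)d + p(n+1)³·I(ε⁻¹)·d, u = C(N+n, n), and b = N(N−d)⋯(N−nd)/((n+1)!·d). Then p·u·N/(d·b) ≤ p(n+1) + ε. -/

import Mathlib

open Finset

/-- `(1+x)^n ≤ (1 - n x)⁻¹` for `0 ≤ x`, `n x < 1`. -/
lemma aux_pow_le_inv (x : ℝ) (hx : 0 ≤ x) :
    ∀ n : ℕ, (n : ℝ) * x < 1 → (1 + x) ^ n ≤ (1 - (n : ℝ) * x)⁻¹ := by
  intro n
  induction n with
  | zero => intro _; simp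
  | succ n ih =>
    intro h
    have hn1 : ((n : ℝ) + 1) * x < 1 := by push_cast at h; linarith
    have hxn : (n : ℝ) * x < 1 := by nlinarith [Nat.cast_nonneg (α := ℝ) n]
    have h1 : 0 < 1 - (n : ℝ) * x := by linarith
    have h2 : 0 < 1 - ((n : ℝ) + 1) * x := by linarith
    have step : (1 + x) ^ (n + 1) ≤ (1 - (n : ℝ) * x)⁻¹ * (1 + x) := by
      rw [pow_succ]
      exact mul_le_mul_of_nonneg_right (ih hxn) (by linarith)
    refine step.trans ?_
    push_cast
    rw [inv_eq_one_div, inv_eq_one_div, div_mul_eq_mul_div,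
      div_le_div_iff₀ h1 (by push_cast at h2 ⊢; linarith)]
    nlinarith [mul_nonneg (mul_nonneg (Nat.cast_nonneg (α := ℝ) n) hx) hx]

lemma aux_asc_prod (m : ℕ) : ∀ k : ℕ, m.ascFactorial k = ∏ j ∈ range k, (m + j)
  | 0 => rfl
  | k + 1 => by
      rw [Nat.ascFactorial_succ, prod_range_succ, aux_asc_prod m k, mul_comm]

set_option maxHeartbeats 1000000 in
/-- With `N = (n+1)d + p(n+1)³ I(ε⁻¹) d`, `u = C(N+n,n)` and
`b = N(N−d)⋯(N−nd)/((n+1)!·d)`, one has `puN/(db) ≤ p(n+1) + ε`. -/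
theorem stmt_5 (n d p : ℕ) (hn : 1 ≤ n) (hd : 1 ≤ d) (hp : 1 ≤ p)
    (ε : ℝ) (hε : 0 < ε) (I : ℕ) (hI : ε⁻¹ < I ∧ ∀ a : ℤ, ε⁻¹ < a → (I : ℤ) ≤ a)
    (N : ℕ) (hN : N = (n + 1) * d + p * (n + 1) ^ 3 * I * d)
    (u : ℕ) (hu : u = (N + n).choose n)
    (b : ℝ)
    (hb : b = (∏ j ∈ Finset.range (n + 1), ((N : ℝ) - j * d)) /
      ((Nat.factorial (n + 1)) * d)) :
    (p : ℝ) * u * N / (d * b) ≤ p * (n + 1) + ε := by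
  obtain ⟨hI1, -⟩ := hI
  have hεinv : (0 : ℝ) < ε⁻¹ := by positivity
  have hIpos : (0 : ℝ) < I := lt_trans hεinv hI1
  have hd1 : (1 : ℝ) ≤ (d : ℝ) := by exact_mod_cast hd
  have hp1 : (1 : ℝ) ≤ (p : ℝ) := by exact_mod_cast hp
  have hIn : 0 < I := by exact_mod_cast hIpos
  have hI1' : (1 : ℝ) ≤ (I : ℝ) := by exact_mod_cast hIn
  have hn0 : (0 : ℝ) ≤ (n : ℝ) := Nat.cast_nonneg n
  set M : ℝ := (p : ℝ) * ((n : ℝ) + 1) ^ 3 * I * d with hMdef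
  clear_value M
  have hMpos : 0 < M := by rw [hMdef]; positivity
  have hNval : (N : ℝ) = ((n : ℝ) + 1) * d + M := by rw [hN, hMdef]; push_cast; ring
  have hN0 : (0 : ℝ) ≤ (N : ℝ) := Nat.cast_nonneg N
  set A : ℝ := ∏ j ∈ range n, ((N : ℝ) + ((j : ℝ) + 1)) with hAdef
  clear_value A
  set B : ℝ := ∏ j ∈ range n, ((N : ℝ) - ((j : ℝ) + 1) * d) with hBdef
  clear_value B
  have hfac : ∀ j : ℕ, j < n → (0 : ℝ) < (N : ℝ) - ((j : ℝ) + 1) * d := by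
    intro j hj
    have : (j : ℝ) + 1 ≤ (n : ℝ) := by exact_mod_cast hj
    nlinarith
  have hBpos : 0 < B := by
    rw [hBdef]
    exact prod_pos fun j hj => hfac j (mem_range.mp hj)
  -- the product in b equals N * B
  have hPB : (∏ j ∈ Finset.range (n + 1), ((N : ℝ) - j * d)) = (N : ℝ) * B := by
    rw [prod_range_succ' (fun j => (N : ℝ) - (j : ℝ) * d) n]
    push_cast
    rw [hBdef]
    simp [mul_comm]
  have hfacpos : (0 : ℝ) < (Nat.factorial (n + 1) : ℝ) := by
    exact_mod_cast Nat.factorial_pos (n + 1)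
  have hNpos : (0 : ℝ) < (N : ℝ) := by nlinarith
  have hbval : (d : ℝ) * b = (N : ℝ) * B / (Nat.factorial (n + 1) : ℝ) := by
    rw [hb, hPB]
    field_simp
  have hdbpos : (0 : ℝ) < (d : ℝ) * b := by
    rw [hbval]; positivity
  -- u * n! = A
  have huA : (u : ℝ) * (Nat.factorial n : ℝ) = A := by
    have hnat : u * Nat.factorial n = ∏ j ∈ range n, (N + 1 + j) := by
      rw [hu, mul_comm, ← Nat.ascFactorial_eq_factorial_mul_choose, aux_asc_prod]
    have := congrArg (fun k : ℕ => (k : ℝ)) hnat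
    push_cast at this
    rw [this, hAdef]
    exact prod_congr rfl fun j _ => by ring
  -- Step 2 : A * M^n ≤ N^n * B
  have hAB : A * M ^ n ≤ (N : ℝ) ^ n * B := by
    have hrefl : B = ∏ j ∈ range n, ((N : ℝ) - ((n : ℝ) - (j : ℝ)) * d) := by
      rw [hBdef, ← prod_range_reflect (fun j => (N : ℝ) - ((j : ℝ) + 1) * d) n]
      refine prod_congr rfl fun j hj => ?_
      have hj' := mem_range.mp hj
      have h1 : ((n - 1 - j : ℕ) : ℝ) = (n : ℝ) - 1 - (j : ℝ) := by
        have : j ≤ n - 1 := by omega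
        push_cast [Nat.cast_sub this, Nat.cast_sub hn]
        ring
      rw [h1]; ring
    calc A * M ^ n = ∏ j ∈ range n, (((N : ℝ) + ((j : ℝ) + 1)) * M) := by
          rw [prod_mul_distrib, prod_const, card_range, hAdef]
      _ ≤ ∏ j ∈ range n, ((N : ℝ) * ((N : ℝ) - ((n : ℝ) - (j : ℝ)) * d)) := ?_
      _ = (N : ℝ) ^ n * B := by
          rw [prod_mul_distrib, prod_const, card_range, ← hrefl]
    refine prod_le_prod (fun j hj => ?_) (fun j hj => ?_)
    · exact mul_nonneg (by positivity) hMpos.le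
    · have hj' : (j : ℝ) + 1 ≤ (n : ℝ) := by exact_mod_cast mem_range.mp hj
      have hM' : M = (N : ℝ) - ((n : ℝ) + 1) * d := by rw [hNval]; ring
      rw [hM']
      nlinarith [mul_nonneg (mul_nonneg (by positivity : (0:ℝ) ≤ (j:ℝ)+1) hN0)
        (by linarith : (0:ℝ) ≤ (d:ℝ) - 1),
        mul_nonneg (by positivity : (0:ℝ) ≤ ((j:ℝ)+1) * ((n:ℝ)+1)) (by linarith : (0:ℝ) ≤ (d:ℝ))]
  -- Step 3 : key scalar inequality
  set x : ℝ := ((n : ℝ) + 1) * d / M with hxdef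
  clear_value x
  have hx0 : (0:ℝ) ≤ x := by rw [hxdef]; positivity
  have hxM : x * M = ((n : ℝ) + 1) * d := by
    rw [hxdef]; exact div_mul_cancel₀ _ hMpos.ne'
  have hMlarge : ((n : ℝ) + 1) ^ 3 * d ≤ M := by
    have hpI : (1:ℝ) ≤ (p:ℝ) * I := by nlinarith
    rw [hMdef]
    nlinarith [mul_nonneg (by positivity : (0:ℝ) ≤ ((n:ℝ)+1)^3 * d)
      (by linarith : (0:ℝ) ≤ (p:ℝ)*I - 1)]
  have hnx : (n : ℝ) * x < 1 := by
    rw [hxdef, mul_div_assoc', div_lt_one hMpos]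
    nlinarith [mul_pos (by positivity : (0:ℝ) < ((n:ℝ)+1)*d)
      (by nlinarith : (0:ℝ) < ((n:ℝ)+1)^2 - n)]
  have hNM : (N : ℝ) / M = 1 + x := by
    rw [hxdef, hNval]; field_simp; ring
  have hpow : ((N : ℝ) / M) ^ n ≤ 1 + ((n : ℝ) + 1) * x := by
    rw [hNM]
    refine (aux_pow_le_inv x hx0 n hnx).trans ?_
    have h1 : 0 < 1 - (n : ℝ) * x := by linarith
    have hkey : (n : ℝ) * ((n : ℝ) + 1) * x ≤ 1 := by
      have h6 : (n : ℝ) * ((n : ℝ) + 1) * x * M ≤ 1 * M := by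
        rw [mul_assoc ((n:ℝ) * ((n:ℝ)+1)) x M, hxM]
        nlinarith
      exact le_of_mul_le_mul_right (by linarith) hMpos
    rw [inv_eq_one_div, div_le_iff₀ h1]
    nlinarith [mul_nonneg hx0 (by linarith : (0:ℝ) ≤ 1 - (n:ℝ) * ((n:ℝ)+1) * x)]
  have hscal : (p : ℝ) * ((n : ℝ) + 1) * ((N : ℝ) / M) ^ n ≤ (p : ℝ) * ((n : ℝ) + 1) + ε := by
    have h2 : (p : ℝ) * ((n : ℝ) + 1) * (1 + ((n : ℝ) + 1) * x) =
        (p : ℝ) * ((n : ℝ) + 1) + (p : ℝ) * ((n : ℝ) + 1) ^ 2 * x := by ring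
    have h3 : (p : ℝ) * ((n : ℝ) + 1) ^ 2 * x = (I : ℝ)⁻¹ := by
      rw [hxdef, hMdef]; field_simp
    have h4 : (I : ℝ)⁻¹ < ε := by
      have := inv_strictAnti₀ hεinv hI1
      rwa [inv_inv] at this
    have h5 := mul_le_mul_of_nonneg_left hpow (by positivity : (0:ℝ) ≤ (p : ℝ) * ((n : ℝ) + 1))
    calc (p : ℝ) * ((n : ℝ) + 1) * ((N : ℝ) / M) ^ n
        ≤ (p : ℝ) * ((n : ℝ) + 1) * (1 + ((n : ℝ) + 1) * x) := h5
      _ = (p : ℝ) * ((n : ℝ) + 1) + (I : ℝ)⁻¹ := by rw [h2, h3]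
      _ ≤ (p : ℝ) * ((n : ℝ) + 1) + ε := by linarith
  -- A ≤ (N/M)^n * B
  have hA' : A ≤ ((N : ℝ) / M) ^ n * B := by
    have hMn : (0:ℝ) < M ^ n := by positivity
    rw [div_pow, div_mul_eq_mul_div, le_div_iff₀ hMn]
    exact hAB
  have hABkey : (p : ℝ) * ((n : ℝ) + 1) * A ≤ ((p : ℝ) * ((n : ℝ) + 1) + ε) * B := by
    calc (p : ℝ) * ((n : ℝ) + 1) * A
        ≤ (p : ℝ) * ((n : ℝ) + 1) * (((N : ℝ) / M) ^ n * B) :=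
          mul_le_mul_of_nonneg_left hA' (by positivity)
      _ = ((p : ℝ) * ((n : ℝ) + 1) * ((N : ℝ) / M) ^ n) * B := by ring
      _ ≤ ((p : ℝ) * ((n : ℝ) + 1) + ε) * B :=
          mul_le_mul_of_nonneg_right hscal hBpos.le
  -- assemble
  rw [div_le_iff₀ hdbpos, hbval, ← mul_div_assoc, le_div_iff₀ hfacpos]
  have hfs : (Nat.factorial (n + 1) : ℝ) = ((n : ℝ) + 1) * (Nat.factorial n : ℝ) := by
    rw [Nat.factorial_succ]; push_cast; ring
  calc (p : ℝ) * u * N * (Nat.factorial (n + 1) : ℝ)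
      = (N : ℝ) * (Nat.factorial n : ℝ) * ((p : ℝ) * ((n : ℝ) + 1) * (u : ℝ)) := by
        rw [hfs]; ring
    _ = (N : ℝ) * ((p : ℝ) * ((n : ℝ) + 1) * A) := by rw [← huA]; ring
    _ ≤ (N : ℝ) * (((p : ℝ) * ((n : ℝ) + 1) + ε) * B) :=
        mul_le_mul_of_nonneg_left hABkey hN0
    _ = ((p : ℝ) * ((n : ℝ) + 1) + ε) * ((N : ℝ) * B) := by ring
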